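/- Let N be a 3-prime zero-symmetric left near-ring and d a nonzero multiplicative derivation of N. If a ∈ N satisfies a·d(x) = 0 for all x ∈ N, then a = 0. -/
import Mathlib


class LeftNearRing (N : Type*) extends AddGroup N, Mul N where
  mul_assoc : ∀ a b c : N, a * b * c = a * (b * c)
  left_distrib : ∀ a b c : N, a * (b + c) = a * b + a * c

theorem stmt4 {N : Type*} [LeftNearRing N]
    (hzs : ∀ x : N, 0 * x = 0)
    (hp : ∀ a b : N, (∀ n : N, a * n * b = 0) → a = 0 ∨ b = 0)
    (d : N → N) (hd : ∀ x y : N, d (x * y) = x * d y + d x * y)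
    (hd0 : ∃ x : N, d x ≠ 0)
    (a : N) (ha : ∀ x : N, a * d x = 0) : a = 0 := by
  obtain ⟨y, hy⟩ := hd0
  have key : ∀ n : N, a * n * d y = 0 := by
    intro n
    have h1 : a * d (n * y) = 0 := ha _
    rw [hd, LeftNearRing.left_distrib] at h1
    have h2 : a * (d n * y) = 0 := by
      rw [← LeftNearRing.mul_assoc, ha, hzs]
    rw [h2, add_zero, ← LeftNearRing.mul_assoc] at h1
    exact h1
  rcases hp a (d y) key with h | h
  · exact h
  · exact absurd h hy
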